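/- arXiv:math/0204172 — 2 statements merged into one kernel-verified Lean document; each statement's English description precedes it below -/
import Mathlib

section
/- Let d ≥ 3 and m an admissible Nakajima parameter matrix. Let τ := pos(P_m^{(d)}) ⊂ ℝ^d be the cone over the Nakajima polytope. Then the dual cone τ^∨ ⊂ (ℝ^d)^∨ equals pos(L), where L := {e_1^∨} ∪ { e_k^∨, m_{k-1} - e_k^∨ : 2 ≤ k ≤ d }. -/
/-- Replace the `k`-th coordinate of `x` by `0`. -/
def coordZero {d : ℕ} (x : Fin d → ℝ) (k : ℕ) : Fin d → ℝ :=
  fun j => if (j : ℕ) = k then 0 else x j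

/-- The `k`-th (0-based) coordinate of `x`, or `0` if out of range. -/
def coordN {d : ℕ} (x : Fin d → ℝ) (k : ℕ) : ℝ :=
  if h : k < d then x ⟨k, h⟩ else 0

/-- The pairing `⟨m_i, x⟩ = ∑_{l=1}^{i} m_{i,l} x_l` of the row `m_i` with the
first `i` coordinates of `x`. -/
def nakPairing {d : ℕ} (m : ℕ → ℕ → ℤ) (i : ℕ) (x : Fin d → ℝ) : ℝ :=
  ∑ j ∈ Finset.univ.filter (fun j : Fin d => (j : ℕ) < i), (m i ((j : ℕ) + 1) : ℝ) * x j

/-- The inductively defined Nakajima polytopes `P_m^{(i)} ⊂ ℝ^d`: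
`P_m^{(1)} = {e₁}` and
`P_m^{(i)} = { (x', x_i, 0,…,0) : (x',0,…,0) ∈ P_m^{(i-1)}, 0 ≤ x_i ≤ ⟨m_{i-1}, x'⟩ }`. -/
def nakP (d : ℕ) (m : ℕ → ℕ → ℤ) : ℕ → Set (Fin d → ℝ)
  | 0 => ∅
  | 1 => {fun j : Fin d => if (j : ℕ) = 0 then (1 : ℝ) else 0}
  | i + 2 =>
      { x | coordZero x (i + 1) ∈ nakP d m (i + 1) ∧
        0 ≤ coordN x (i + 1) ∧ coordN x (i + 1) ≤ nakPairing m (i + 1) x }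

/-- Admissibility of the parameter matrix `m`:
`⟨m_{i-1}, x⟩ ≥ 0` for all `x ∈ P_m^{(i-1)}`, `2 ≤ i ≤ d`. -/
def NakAdmissibleR (d : ℕ) (m : ℕ → ℕ → ℤ) : Prop :=
  ∀ i, 2 ≤ i → i ≤ d → ∀ x ∈ nakP d m (i - 1), 0 ≤ nakPairing m (i - 1) x

/-- The cone `τ = pos(P_m^{(d)})` over the Nakajima polytope. -/
def nakCone (d : ℕ) (m : ℕ → ℕ → ℤ) : Set (Fin d → ℝ) :=
  { y | ∃ (r : ℝ) (x : Fin d → ℝ), 0 ≤ r ∧ x ∈ nakP d m d ∧ y = r • x }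

/-- The list `L = {e₁^∨} ∪ {e_k^∨, m_{k-1} - e_k^∨ : 2 ≤ k ≤ d}` of `2d-1` vectors:
for `i < d` the vector `e_{i+1}^∨`, and for `i = d + l` the vector `m_{l+1} - e_{l+2}^∨`. -/
def LvecZ (d : ℕ) (m : ℕ → ℕ → ℤ) (i : Fin (2 * d - 1)) (j : Fin d) : ℤ :=
  if (i : ℕ) < d then (if (j : ℕ) = (i : ℕ) then 1 else 0)
  else m ((i : ℕ) - d + 1) ((j : ℕ) + 1) - (if (j : ℕ) = (i : ℕ) - d + 1 then 1 else 0)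

lemma nakPairing_congr {d : ℕ} (m : ℕ → ℕ → ℤ) (p : ℕ) {x x' : Fin d → ℝ}
    (h : ∀ j : Fin d, (j : ℕ) < p → x j = x' j) :
    nakPairing m p x = nakPairing m p x' := by
  unfold nakPairing
  refine Finset.sum_congr rfl fun j hj => ?_
  simp only [Finset.mem_filter] at hj
  rw [h j hj.2]

lemma nakPairing_full {d : ℕ} (m : ℕ → ℕ → ℤ) (hm : ∀ i j, i < j → m i j = 0)
    (p : ℕ) (x : Fin d → ℝ) :
    ∑ j : Fin d, (m p ((j : ℕ) + 1) : ℝ) * x j = nakPairing m p x := by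
  unfold nakPairing
  rw [Finset.sum_filter]
  refine Finset.sum_congr rfl fun j _ => ?_
  by_cases h : (j : ℕ) < p
  · simp [h]
  · have : m p ((j : ℕ) + 1) = 0 := hm _ _ (by omega)
    simp [h, this]

lemma nakP_props (d : ℕ) (m : ℕ → ℕ → ℤ) :
    ∀ i, ∀ x ∈ nakP d m (i + 1),
      (∀ j : Fin d, (0 : ℝ) ≤ x j) ∧
      (∀ p : Fin d, 1 ≤ (p : ℕ) → (p : ℕ) < i + 1 → x p ≤ nakPairing m (p : ℕ) x) ∧
      (∀ j : Fin d, i + 1 ≤ (j : ℕ) → x j = 0) ∧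
      (∀ j : Fin d, (j : ℕ) = 0 → x j = 1) := by
  intro i
  induction i with
  | zero =>
    intro x hx
    simp only [nakP, Set.mem_singleton_iff] at hx
    subst hx
    refine ⟨fun j => ?_, fun p hp1 hp2 => by omega, fun j hj => ?_, fun j hj => ?_⟩
    · by_cases h : (j : ℕ) = 0 <;> simp [h]
    · have : (j : ℕ) ≠ 0 := by omega
      simp [this]
    · simp [hj]
  | succ i IH =>
    intro x hx
    have hx' : coordZero x (i + 1) ∈ nakP d m (i + 1) := hx.1
    obtain ⟨h0, hbd, hz, h1⟩ := IH _ hx'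
    have hcz : ∀ j : Fin d, (j : ℕ) ≠ i + 1 → coordZero x (i + 1) j = x j := by
      intro j hj; simp [coordZero, hj]
    have hcoord : ∀ j : Fin d, (j : ℕ) = i + 1 → x j = coordN x (i + 1) := by
      intro j hj
      have hjd : i + 1 < d := hj ▸ j.isLt
      have hje : j = ⟨i + 1, hjd⟩ := Fin.ext hj
      simp only [coordN, dif_pos hjd, hje]
    refine ⟨fun j => ?_, fun p hp1 hp2 => ?_, fun j hj => ?_, fun j hj => ?_⟩
    · by_cases h : (j : ℕ) = i + 1
      · rw [hcoord j h]; exact hx.2.1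
      · rw [← hcz j h]; exact h0 j
    · by_cases h : (p : ℕ) = i + 1
      · rw [hcoord p h, h]; exact hx.2.2
      · have hplt : (p : ℕ) < i + 1 := by omega
        have hpair : nakPairing m (p : ℕ) (coordZero x (i + 1)) = nakPairing m (p : ℕ) x :=
          nakPairing_congr m _ (fun j hj => hcz j (by omega))
        rw [← hcz p h, ← hpair]
        exact hbd p hp1 hplt
    · have h : (j : ℕ) ≠ i + 1 := by omega
      rw [← hcz j h]
      exact hz j (by omega)
    · have h : (j : ℕ) ≠ i + 1 := by omega
      rw [← hcz j h]
      exact h1 j hj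

lemma dual_rep (d : ℕ) (hd : 3 ≤ d) (m : ℕ → ℕ → ℤ)
    (hm : ∀ i j, i < j → m i j = 0) (hadm : NakAdmissibleR d m) :
    ∀ i, i + 1 ≤ d → ∀ y : Fin d → ℝ,
      (∀ j : Fin d, i + 1 ≤ (j : ℕ) → y j = 0) →
      (∀ x ∈ nakP d m (i + 1), 0 ≤ ∑ j, y j * x j) →
      ∃ a : Fin (2 * d - 1) → ℝ, (∀ t, 0 ≤ a t) ∧
        ∀ j : Fin d, y j = ∑ t, a t * (LvecZ d m t j : ℝ) := by
  intro i
  induction i with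
  | zero =>
    intro _ y hsupp hpos
    have h0d : (0 : ℕ) < d := by omega
    set j0 : Fin d := ⟨0, h0d⟩ with hj0
    have he1 : (fun j : Fin d => if (j : ℕ) = 0 then (1 : ℝ) else 0) ∈ nakP d m 1 := by
      simp [nakP]
    have hy0 : 0 ≤ y j0 := by
      have := hpos _ he1
      have hsum : ∑ j : Fin d, y j * (if (j : ℕ) = 0 then (1 : ℝ) else 0) = y j0 := by
        rw [Fintype.sum_eq_single j0]
        · simp [hj0]
        · intro j hj
          have : (j : ℕ) ≠ 0 := fun h => hj (Fin.ext h)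
          simp [this]
      rwa [hsum] at this
    have h02d : (0 : ℕ) < 2 * d - 1 := by omega
    set t0 : Fin (2 * d - 1) := ⟨0, h02d⟩ with ht0
    refine ⟨fun t => if t = t0 then y j0 else 0, fun t => ?_, fun j => ?_⟩
    · by_cases h : t = t0 <;> simp [h, hy0]
    · have hform : ∀ t : Fin (2 * d - 1), (if t = t0 then y j0 else 0) * (LvecZ d m t j : ℝ)
          = if t = t0 then y j0 * (LvecZ d m t j : ℝ) else 0 := by
        intro t; split <;> simp
      rw [Finset.sum_congr rfl fun t _ => hform t, Finset.sum_ite_eq' Finset.univ t0]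
      simp only [Finset.mem_univ, if_true]
      have hL : LvecZ d m t0 j = if (j : ℕ) = 0 then 1 else 0 := by
        simp [LvecZ, ht0, h0d]
      rw [hL]
      by_cases h : (j : ℕ) = 0
      · have : j = j0 := Fin.ext h
        simp [this, h, hj0]
      · have : (1:ℕ) ≤ (j : ℕ) := by omega
        simp [h, hsupp j this]
  | succ i IH =>
    intro hle y hsupp hpos
    have hpd : i + 1 < d := by omega
    set pF : Fin d := ⟨i + 1, hpd⟩ with hpF
    set c : ℝ := max 0 (-(y pF)) with hc
    set b : ℝ := max 0 (y pF) with hb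
    set y' : Fin d → ℝ := fun j =>
      if (j : ℕ) = i + 1 then 0 else y j - c * (m (i + 1) ((j : ℕ) + 1) : ℝ) with hy'
    have hbc : b - c = y pF := by
      rcases le_or_gt 0 (y pF) with h | h
      · rw [hb, hc, max_eq_right h, max_eq_left (by linarith)]; ring
      · rw [hb, hc, max_eq_left (le_of_lt h), max_eq_right (by linarith)]; ring
    have hc0 : 0 ≤ c := le_max_left _ _
    have hb0 : 0 ≤ b := le_max_left _ _
    -- y' is supported on coordinates ≤ i and nonneg on nakP (i+1)
    have hsupp' : ∀ j : Fin d, i + 1 ≤ (j : ℕ) → y' j = 0 := by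
      intro j hj
      by_cases h : (j : ℕ) = i + 1
      · simp [hy', h]
      · have hyj : y j = 0 := hsupp j (by omega)
        have hmj : m (i + 1) ((j : ℕ) + 1) = 0 := hm _ _ (by omega)
        simp [hy', h, hyj, hmj]
    have hpos' : ∀ x' ∈ nakP d m (i + 1), 0 ≤ ∑ j, y' j * x' j := by
      intro x' hx'
      obtain ⟨h0, hbd, hz, h1⟩ := nakP_props d m i x' hx'
      have hzp : x' pF = 0 := hz pF (by simp [hpF])
      have hadmx : 0 ≤ nakPairing m (i + 1) x' := by
        have := hadm (i + 2) (by omega) (by omega) x' (by simpa using hx')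
        simpa using this
      set S : ℝ := nakPairing m (i + 1) x' with hS
      set v : ℝ := if 0 ≤ y pF then 0 else S with hv
      set x : Fin d → ℝ := fun j => if (j : ℕ) = i + 1 then v else x' j with hxdef
      have hv0 : 0 ≤ v := by
        rw [hv]; split <;> [exact le_refl 0; exact hadmx]
      have hxcz : coordZero x (i + 1) = x' := by
        funext j
        by_cases h : (j : ℕ) = i + 1
        · have : j = pF := Fin.ext h
          simp [coordZero, h, this, hpF, show x' ⟨i + 1, hpd⟩ = 0 from hzp]
        · simp [coordZero, hxdef, h]
      have hxcn : coordN x (i + 1) = v := by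
        simp [coordN, dif_pos hpd, hxdef]
      have hxS : nakPairing m (i + 1) x = S := by
        rw [hS]
        refine nakPairing_congr m _ (fun j hj => ?_)
        have hne : (j : ℕ) ≠ i + 1 := by omega
        simp [hxdef, hne]
      have hxmem : x ∈ nakP d m (i + 2) := by
        refine ⟨hxcz ▸ hx', hxcn ▸ hv0, ?_⟩
        rw [hxcn, hxS, hv]
        split <;> [exact hadmx; exact le_refl S]
      have hmain := hpos x hxmem
      -- ∑ y x = ∑ y x' + y_p v
      have hsum1 : ∑ j, y j * x j = (∑ j, y j * x' j) + y pF * v := by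
        have : ∀ j : Fin d, y j * x j = y j * x' j + (if j = pF then y pF * v else 0) := by
          intro j
          by_cases h : (j : ℕ) = i + 1
          · have hj : j = pF := Fin.ext h
            simp [hxdef, h, hj, hpF, show x' ⟨i + 1, hpd⟩ = 0 from hzp]
          · have hj : j ≠ pF := fun hh => h (by rw [hh])
            simp [hxdef, h, hj]
        rw [Finset.sum_congr rfl (fun j _ => this j), Finset.sum_add_distrib,
          Finset.sum_ite_eq' Finset.univ pF]
        simp
      -- ∑ y' x' = ∑ y x' - c * S
      have hsum2 : ∑ j, y' j * x' j = (∑ j, y j * x' j) - c * S := by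
        have : ∀ j : Fin d, y' j * x' j = (y j - c * (m (i + 1) ((j : ℕ) + 1) : ℝ)) * x' j := by
          intro j
          by_cases h : (j : ℕ) = i + 1
          · have hj : j = pF := Fin.ext h
            simp [hy', h, hj, hzp]
          · simp [hy', h]
        rw [Finset.sum_congr rfl (fun j _ => this j)]
        have hfull := nakPairing_full m hm (i + 1) x'
        rw [← hS] at hfull
        rw [← hfull, Finset.mul_sum, ← Finset.sum_sub_distrib]
        exact Finset.sum_congr rfl fun j _ => by ring
      have hyv : y pF * v = -(c * S) := by
        rw [hv]
        rcases le_or_gt 0 (y pF) with h | h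
        · rw [if_pos h, hc, max_eq_left (by linarith)]; ring
        · rw [if_neg (not_le.mpr h), hc, max_eq_right (by linarith)]; ring
      rw [hsum2]
      rw [hsum1, hyv] at hmain
      linarith
    obtain ⟨a', ha'0, ha'⟩ := IH (by omega) y' hsupp' hpos'
    have ht1lt : i + 1 < 2 * d - 1 := by omega
    have ht2lt : d + i < 2 * d - 1 := by omega
    set t1 : Fin (2 * d - 1) := ⟨i + 1, ht1lt⟩ with ht1
    set t2 : Fin (2 * d - 1) := ⟨d + i, ht2lt⟩ with ht2
    have ht12 : t1 ≠ t2 := by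
      simp only [ht1, ht2, ne_eq, Fin.mk.injEq]
      omega
    refine ⟨fun t => a' t + (if t = t1 then b else 0) + (if t = t2 then c else 0),
      fun t => ?_, fun j => ?_⟩
    · have hh1 : (0:ℝ) ≤ (if t = t1 then b else 0) := by split <;> simp [hb0]
      have hh2 : (0:ℝ) ≤ (if t = t2 then c else 0) := by split <;> simp [hc0]
      exact add_nonneg (add_nonneg (ha'0 t) hh1) hh2
    have hexp : ∀ t : Fin (2 * d - 1),
        (a' t + (if t = t1 then b else 0) + (if t = t2 then c else 0)) * (LvecZ d m t j : ℝ)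
        = a' t * (LvecZ d m t j : ℝ) + (if t = t1 then b * (LvecZ d m t j : ℝ) else 0)
          + (if t = t2 then c * (LvecZ d m t j : ℝ) else 0) := by
      intro t
      split_ifs <;> ring
    rw [Finset.sum_congr rfl (fun t _ => hexp t), Finset.sum_add_distrib,
      Finset.sum_add_distrib, Finset.sum_ite_eq' Finset.univ t1, Finset.sum_ite_eq' Finset.univ t2]
    simp only [Finset.mem_univ, if_true]
    rw [← ha' j]
    have hL1 : (LvecZ d m t1 j : ℝ) = if (j : ℕ) = i + 1 then 1 else 0 := by
      simp only [LvecZ, ht1, if_pos hpd]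
      split <;> simp
    have hL2 : (LvecZ d m t2 j : ℝ) =
        (m (i + 1) ((j : ℕ) + 1) : ℝ) - (if (j : ℕ) = i + 1 then 1 else 0) := by
      have hnd : ¬ ((t2 : ℕ) < d) := by simp [ht2]
      have harith : (t2 : ℕ) - d + 1 = i + 1 := by simp [ht2]
      simp only [LvecZ, if_neg hnd, harith]
      push_cast
      split <;> simp
    rw [hL1, hL2]
    by_cases h : (j : ℕ) = i + 1
    · have hy'j : y' j = 0 := by simp [hy', h]
      have hmz : m (i + 1) ((j : ℕ) + 1) = 0 := hm _ _ (by omega)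
      have hjp : j = pF := Fin.ext h
      rw [hy'j, if_pos h, hmz, hjp, ← hbc]
      push_cast
      ring
    · have hy'j : y' j = y j - c * (m (i + 1) ((j : ℕ) + 1) : ℝ) := by simp [hy', h]
      rw [if_neg h, hy'j]
      ring

theorem stmt14 (d : ℕ) (hd : 3 ≤ d) (m : ℕ → ℕ → ℤ)
    -- lower-triangularity: `m i j = 0` for `j > i` (1-based indices)
    (hm : ∀ i j, i < j → m i j = 0)
    (hadm : NakAdmissibleR d m) :
    -- the dual cone `τ^∨` equals `pos(L)`
    { y : Fin d → ℝ | ∀ z ∈ nakCone d m, 0 ≤ ∑ j : Fin d, y j * z j } =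
      { y : Fin d → ℝ | ∃ a : Fin (2 * d - 1) → ℝ, (∀ i, 0 ≤ a i) ∧
          ∀ j : Fin d, y j = ∑ i : Fin (2 * d - 1), a i * (LvecZ d m i j : ℝ) } := by
  have hd1 : d - 1 + 1 = d := by omega
  ext y
  simp only [Set.mem_setOf_eq]
  constructor
  · intro hy
    refine dual_rep d hd m hm hadm (d - 1) (by omega) y (fun j hj => absurd j.isLt (by omega)) ?_
    intro x hx
    rw [hd1] at hx
    have : x ∈ nakCone d m := ⟨1, x, zero_le_one, hx, (one_smul _ _).symm⟩
    exact hy x this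
  · rintro ⟨a, ha0, hae⟩ z ⟨r, x, hr, hx, rfl⟩
    obtain ⟨h0, hbd, hz, h1⟩ := nakP_props d m (d - 1) x (by rwa [hd1])
    have hinner : ∀ t : Fin (2 * d - 1), 0 ≤ ∑ j : Fin d, (LvecZ d m t j : ℝ) * x j := by
      intro t
      by_cases htd : (t : ℕ) < d
      · have : ∑ j : Fin d, (LvecZ d m t j : ℝ) * x j = x ⟨t, htd⟩ := by
          rw [Fintype.sum_eq_single (⟨(t : ℕ), htd⟩ : Fin d)]
          · simp [LvecZ, htd]
          · intro j hj
            have : (j : ℕ) ≠ (t : ℕ) := fun h => hj (Fin.ext h)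
            simp [LvecZ, htd, this]
        rw [this]
        exact h0 _
      · set p : ℕ := (t : ℕ) - d + 1 with hp
        have hp1 : 1 ≤ p := by omega
        have hpd : p < d := by omega
        have hsum : ∑ j : Fin d, (LvecZ d m t j : ℝ) * x j =
            nakPairing m p x - x ⟨p, hpd⟩ := by
          have : ∀ j : Fin d, (LvecZ d m t j : ℝ) * x j =
              (m p ((j : ℕ) + 1) : ℝ) * x j - (if j = (⟨p, hpd⟩ : Fin d) then x j else 0) := by
            intro j
            simp only [LvecZ, if_neg htd, ← hp]
            push_cast
            by_cases h : (j : ℕ) = p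
            · have hj : j = (⟨p, hpd⟩ : Fin d) := Fin.ext h
              simp [h, hj]; ring
            · have hj : j ≠ (⟨p, hpd⟩ : Fin d) := fun hh => h (by rw [hh])
              simp [h, hj]
          rw [Finset.sum_congr rfl (fun j _ => this j), Finset.sum_sub_distrib,
            Finset.sum_ite_eq' Finset.univ, nakPairing_full m hm p x]
          simp
        rw [hsum, sub_nonneg]
        have := hbd ⟨p, hpd⟩ hp1 (by omega)
        simpa using this
    have hswap : ∑ j : Fin d, y j * (r • x) j =
        r * ∑ t : Fin (2 * d - 1), a t * ∑ j : Fin d, (LvecZ d m t j : ℝ) * x j := by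
      simp only [Pi.smul_apply, smul_eq_mul]
      calc ∑ j : Fin d, y j * (r * x j)
          = ∑ j : Fin d, ∑ t : Fin (2 * d - 1), a t * (LvecZ d m t j : ℝ) * (r * x j) := by
            refine Finset.sum_congr rfl fun j _ => ?_
            rw [hae j, Finset.sum_mul]
        _ = ∑ t : Fin (2 * d - 1), ∑ j : Fin d, a t * (LvecZ d m t j : ℝ) * (r * x j) :=
            Finset.sum_comm
        _ = r * ∑ t : Fin (2 * d - 1), a t * ∑ j : Fin d, (LvecZ d m t j : ℝ) * x j := by
            rw [Finset.mul_sum]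
            refine Finset.sum_congr rfl fun t _ => ?_
            rw [Finset.mul_sum, Finset.mul_sum]
            exact Finset.sum_congr rfl fun j _ => by ring
    rw [hswap]
    have : 0 ≤ ∑ t : Fin (2 * d - 1), a t * ∑ j : Fin d, (LvecZ d m t j : ℝ) * x j :=
      Finset.sum_nonneg fun t _ => mul_nonneg (ha0 t) (hinner t)
    exact mul_nonneg hr this
end

section
/- For k ∈ ℤ with k ≥ 2 and d ≥ 4, let s_k^{(d)} := conv({e_1, e_1 + k·e_2, e_1 + k(e_2+e_3), …, e_1 + k(e_2+⋯+e_d)}) ⊂ ℝ^d. Then s_k^{(d)} equals the Nakajima polytope P_m^{(d)} where m is the (d-1) × d matrix with m_{1,1} = k, m_{i,i} = 1 for 2 ≤ i ≤ d-1, and all other entries zero; moreover this m is admissible. -/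
lemma coordN_fin {d : ℕ} (x : Fin d → ℝ) (j : Fin d) : coordN x (j : ℕ) = x j := by
  simp [coordN, j.isLt]

lemma coordN_ge {d : ℕ} (x : Fin d → ℝ) {j : ℕ} (h : d ≤ j) : coordN x j = 0 := by
  simp [coordN]; omega

lemma coordN_coordZero {d : ℕ} (x : Fin d → ℝ) (a b : ℕ) :
    coordN (coordZero x a) b = if b = a then 0 else coordN x b := by
  unfold coordN coordZero
  by_cases h : b < d
  · simp only [dif_pos h]
  · simp only [dif_neg h]; split <;> rfl

lemma pairing_one {d : ℕ} (k : ℤ) (m : ℕ → ℕ → ℤ) (hm : m 1 1 = k) (hd : 0 < d)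
    (x : Fin d → ℝ) : nakPairing m 1 x = (k : ℝ) * coordN x 0 := by
  unfold nakPairing
  have h : Finset.univ.filter (fun j : Fin d => (j : ℕ) < 1) = {(⟨0, hd⟩ : Fin d)} := by
    ext j; simp [Fin.ext_iff]
  rw [h, Finset.sum_singleton, hm]
  simp [coordN, hd]

lemma pairing_mid {d : ℕ} (k : ℤ) (m : ℕ → ℕ → ℤ) {i : ℕ}
    (hmdef : ∀ i j, m i j =
      if i = 1 ∧ j = 1 then k else if 2 ≤ i ∧ i ≤ d - 1 ∧ j = i then 1 else 0)
    (h2 : 2 ≤ i) (hi : i ≤ d - 1) (hd : 4 ≤ d)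
    (x : Fin d → ℝ) : nakPairing m i x = coordN x (i - 1) := by
  have hi1 : i - 1 < d := by omega
  unfold nakPairing
  have key : ∀ j ∈ Finset.univ.filter (fun j : Fin d => (j : ℕ) < i),
      ((m i ((j : ℕ) + 1) : ℝ)) * x j = if j = (⟨i - 1, hi1⟩ : Fin d) then x j else 0 := by
    intro j hj
    rw [hmdef]
    by_cases hji : j = (⟨i - 1, hi1⟩ : Fin d)
    · have : (j : ℕ) + 1 = i := by rw [hji]; simp; omega
      have hne1 : ¬ (i = 1) := by omega
      have : i - 1 + 1 = i := by omega
      simp [hji, this, hne1]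
      exact fun h' => absurd (h' h2) (by omega)
    · have : ¬ ((j : ℕ) + 1 = i) := by
        intro hc; apply hji; apply Fin.ext; simp; omega
      have hne1 : ¬ (i = 1 ∧ (j:ℕ) + 1 = 1) := by omega
      simp [this, hji, hne1]
      exact fun h1 => absurd h1 (by omega)
  rw [Finset.sum_congr rfl key, Finset.sum_ite_eq']
  have : (⟨i - 1, hi1⟩ : Fin d) ∈ Finset.univ.filter (fun j : Fin d => (j : ℕ) < i) := by
    simp; omega
  rw [if_pos this]
  show x _ = coordN x (i-1)
  rw [← coordN_fin x ⟨i-1, hi1⟩]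

lemma charP {d : ℕ} (k : ℤ) (m : ℕ → ℕ → ℤ)
    (hmdef : ∀ i j, m i j =
      if i = 1 ∧ j = 1 then k else if 2 ≤ i ∧ i ≤ d - 1 ∧ j = i then 1 else 0)
    (hd : 4 ≤ d) :
    ∀ n, 1 ≤ n → n ≤ d → ∀ x : Fin d → ℝ,
    (x ∈ nakP d m n ↔
      (coordN x 0 = 1 ∧
       (∀ j, n ≤ j → coordN x j = 0) ∧
       (∀ j, 1 ≤ j → j < n → 0 ≤ coordN x j ∧
          coordN x j ≤ (if j = 1 then (k:ℝ) else coordN x (j-1))))) := by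
  intro n
  induction n with
  | zero => omega
  | succ n ih =>
    intro _ hle x
    cases n with
    | zero =>
      constructor
      · intro hx
        have hx' : x = (fun j : Fin d => if (j:ℕ) = 0 then (1:ℝ) else 0) := hx
        subst hx'
        refine ⟨by simp [coordN, show 0 < d by omega], ?_, by omega⟩
        intro j hj
        by_cases h : j < d
        · have : ¬ (j = 0) := by omega
          simp [coordN, h, this]
        · exact coordN_ge _ (by omega)
      · rintro ⟨h1, h0, -⟩
        show x = _
        funext j
        by_cases hj : (j:ℕ) = 0
        · rw [← coordN_fin x j, hj, h1]; simp [hj]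
        · rw [← coordN_fin x j, h0 _ (by omega)]; simp [hj]
    | succ n' =>
      have hmem : x ∈ nakP d m (n' + 1 + 1) ↔
          (coordZero x (n'+1) ∈ nakP d m (n'+1) ∧ 0 ≤ coordN x (n'+1) ∧
            coordN x (n'+1) ≤ nakPairing m (n'+1) x) := Iff.rfl
      rw [hmem, ih (by omega) (by omega) (coordZero x (n'+1))]
      have hpair : nakPairing m (n'+1) x =
          if n' + 1 = 1 then (k:ℝ) * coordN x 0 else coordN x n' := by
        by_cases h1 : n' = 0
        · subst h1
          simp only [if_pos rfl]
          exact pairing_one k m (by rw [hmdef]; simp) (by omega) x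
        · rw [if_neg (by omega)]
          have := pairing_mid k m hmdef (i := n'+1) (by omega) (by omega) hd x
          simpa using this
      simp only [coordN_coordZero]
      constructor
      · rintro ⟨⟨h1, h0, hb⟩, hge, hub⟩
        rw [if_neg (by omega)] at h1
        refine ⟨h1, ?_, ?_⟩
        · intro j hj
          have := h0 j (by omega)
          rwa [if_neg (by omega)] at this
        · intro j hj1 hj2
          by_cases hjp : j = n' + 1
          · subst hjp
            refine ⟨hge, ?_⟩
            rw [hpair] at hub
            by_cases h1' : n' = 0
            · subst h1'
              rw [if_pos rfl]
              rw [if_pos rfl, h1, mul_one] at hub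
              exact hub
            · rw [if_neg (by omega)]
              rw [if_neg (by omega)] at hub
              simpa using hub
          · have := hb j hj1 (by omega)
            have e1 : ¬(j = n' + 1) := by omega
            have e2 : ¬(j - 1 = n' + 1) := by omega
            simp only [if_neg e1, if_neg e2] at this
            exact this
      · rintro ⟨h1, h0, hb⟩
        refine ⟨⟨?_, ?_, ?_⟩, ?_, ?_⟩
        · rw [if_neg (by omega)]; exact h1
        · intro j hj
          by_cases hjp : j = n' + 1
          · rw [if_pos hjp]
          · rw [if_neg hjp]
            exact h0 j (by omega)
        · intro j hj1 hj2
          have := hb j hj1 (by omega)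
          have e1 : ¬(j = n' + 1) := by omega
          have e2 : ¬(j - 1 = n' + 1) := by omega
          simp only [if_neg e1, if_neg e2]
          exact this
        · exact (hb (n'+1) (by omega) (by omega)).1
        · rw [hpair]
          have := (hb (n'+1) (by omega) (by omega)).2
          by_cases h1' : n' = 0
          · subst h1'
            rw [if_pos rfl, h1, mul_one]
            rw [if_pos rfl] at this
            exact this
          · rw [if_neg (by omega)]
            rw [if_neg (by omega)] at this
            simpa using this

lemma coordN_combo {d : ℕ} (a b : ℝ) (x y : Fin d → ℝ) (j : ℕ) :
    coordN (a • x + b • y) j = a * coordN x j + b * coordN y j := by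
  unfold coordN
  split
  · simp [Pi.add_apply]
  · simp

theorem stmt18 (d : ℕ) (hd : 4 ≤ d) (k : ℤ) (hk : 2 ≤ k)
    -- `m` has `m_{1,1} = k`, `m_{i,i} = 1` for `2 ≤ i ≤ d-1`, zeros elsewhere
    (m : ℕ → ℕ → ℤ)
    (hmdef : ∀ i j, m i j =
      if i = 1 ∧ j = 1 then k else if 2 ≤ i ∧ i ≤ d - 1 ∧ j = i then 1 else 0) :
    -- this `m` is admissible, and `s_k^{(d)} = conv({e₁, e₁ + k e₂, …,
    -- e₁ + k(e₂ + ⋯ + e_d)})` equals the Nakajima polytope `P_m^{(d)}`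
    NakAdmissibleR d m ∧
    nakP d m d = convexHull ℝ
      { x : Fin d → ℝ | ∃ t : Fin d,
          x = fun j : Fin d =>
            if (j : ℕ) = 0 then (1 : ℝ)
            else if (j : ℕ) ≤ (t : ℕ) then (k : ℝ) else 0 } := by
  have char := charP k m hmdef hd
  have hk0 : (0:ℝ) < (k:ℝ) := by exact_mod_cast lt_of_lt_of_le (by norm_num) hk
  constructor
  · -- admissibility
    intro i h2 hid x hx
    rcases Nat.lt_or_ge i 3 with h3 | h3
    · have hi : i - 1 = 1 := by omega
      rw [hi] at hx ⊢
      have hc := (char 1 le_rfl (by omega) x).1 hx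
      rw [pairing_one k m (by rw [hmdef]; simp) (by omega) x, hc.1, mul_one]
      exact le_of_lt hk0
    · have h2' : 2 ≤ i - 1 := by omega
      rw [pairing_mid k m hmdef h2' (by omega) hd x]
      have hc := (char (i-1) (by omega) (by omega) x).1 hx
      exact (hc.2.2 (i-1-1) (by omega) (by omega)).1
  · -- hull equality
    set v : Fin d → (Fin d → ℝ) := fun t j =>
      if (j : ℕ) = 0 then (1 : ℝ) else if (j : ℕ) ≤ (t : ℕ) then (k : ℝ) else 0 with hv
    set S : Set (Fin d → ℝ) := { x | ∃ t : Fin d, x = v t } with hSdef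
    show nakP d m d = convexHull ℝ S
    have hvco : ∀ (t : Fin d) (j : ℕ), 1 ≤ j → j < d →
        coordN (v t) j = if j ≤ (t:ℕ) then (k:ℝ) else 0 := by
      intro t j h1 h2
      have hc : coordN (v t) j = v t ⟨j, h2⟩ := by simp [coordN, h2]
      rw [hc]
      show (if j = 0 then (1:ℝ) else if j ≤ (t:ℕ) then (k:ℝ) else 0) = _
      rw [if_neg (by omega : ¬ (j = 0))]
    have hvc0 : ∀ t : Fin d, coordN (v t) 0 = 1 := by
      intro t
      simp [coordN, show 0 < d by omega, hv]
    apply Set.Subset.antisymm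
    · -- nakP ⊆ hull
      intro x hx
      obtain ⟨h1, h0, hb⟩ := (char d (by omega) le_rfl x).1 hx
      set u : ℕ → ℝ := fun j => if j = 0 then (k:ℝ) else coordN x j with hu
      have hud : u d = 0 := by
        simp only [hu, if_neg (by omega : ¬ (d = 0))]
        exact coordN_ge x le_rfl
      have hmono : ∀ t, t < d → u (t+1) ≤ u t := by
        intro t ht
        by_cases h0' : t = 0
        · subst h0'
          simp only [hu, if_neg (by omega : ¬ (0+1 = 0)), if_pos rfl]
          have := (hb 1 le_rfl (by omega)).2
          rwa [if_pos rfl] at this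
        · simp only [hu, if_neg (by omega : ¬ (t+1 = 0)), if_neg h0']
          by_cases hlt : t + 1 < d
          · have := (hb (t+1) (by omega) hlt).2
            rw [if_neg (by omega)] at this
            simpa using this
          · have he : t + 1 = d := by omega
            rw [he, coordN_ge x le_rfl]
            exact (hb t (by omega) ht).1
      have htel : ∀ j, j ≤ d → ∑ t ∈ Finset.Ico j d, (u t - u (t+1)) = u j := by
        intro j hj
        rw [Finset.sum_Ico_eq_sub _ hj, Finset.sum_range_sub' u, Finset.sum_range_sub' u, hud]
        ring
      set w : Fin d → ℝ := fun t => (u t - u (t+1)) / k with hw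
      have hw0 : ∀ t : Fin d, 0 ≤ w t := fun t =>
        div_nonneg (sub_nonneg.2 (hmono t t.isLt)) hk0.le
      have hwsum : ∑ t, w t = 1 := by
        rw [hw]
        rw [← Finset.sum_div, Fin.sum_univ_eq_sum_range (fun t => u t - u (t+1)) d,
          Finset.range_eq_Ico, htel 0 (by omega)]
        simp only [hu, if_pos rfl]
        field_simp
      have hrepr : ∑ t, w t • v t = x := by
        funext j
        have happ : (∑ t, w t • v t) j = ∑ t, w t * v t j := by
          rw [Finset.sum_apply]
          simp
        rw [happ]
        by_cases hj0 : (j:ℕ) = 0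
        · have : ∀ t : Fin d, w t * v t j = w t := by
            intro t; simp [hv, hj0]
          rw [Finset.sum_congr rfl (fun t _ => this t), hwsum,
            ← coordN_fin x j, hj0, h1]
        · have hterm : ∀ t : Fin d, w t * v t j =
              (fun tn : ℕ => if (j:ℕ) ≤ tn then u tn - u (tn+1) else 0) (t:ℕ) := by
            intro t
            simp only [hv, hw, if_neg hj0]
            by_cases hle : (j:ℕ) ≤ (t:ℕ)
            · rw [if_pos hle, if_pos hle]
              field_simp
            · rw [if_neg hle, if_neg hle, mul_zero]
          rw [Finset.sum_congr rfl (fun t _ => hterm t),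
            Fin.sum_univ_eq_sum_range (fun tn : ℕ => if (j:ℕ) ≤ tn then u tn - u (tn+1) else 0) d,
            Finset.range_eq_Ico,
            ← Finset.sum_Ico_consecutive _ (Nat.zero_le (j:ℕ)) (le_of_lt j.isLt)]
          have hz : ∑ t ∈ Finset.Ico 0 (j:ℕ),
              (if (j:ℕ) ≤ t then u t - u (t+1) else 0) = 0 := by
            apply Finset.sum_eq_zero
            intro t ht
            rw [Finset.mem_Ico] at ht
            rw [if_neg (by omega)]
          have hz2 : ∑ t ∈ Finset.Ico (j:ℕ) d,
              (if (j:ℕ) ≤ t then u t - u (t+1) else 0) =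
              ∑ t ∈ Finset.Ico (j:ℕ) d, (u t - u (t+1)) := by
            apply Finset.sum_congr rfl
            intro t ht
            rw [Finset.mem_Ico] at ht
            rw [if_pos ht.1]
          rw [hz, hz2, htel _ (le_of_lt j.isLt), zero_add]
          simp [hu, hj0, coordN_fin]
      have hz : ∀ t : Fin d, t ∈ Finset.univ → v t ∈ S := fun t _ => ⟨t, rfl⟩
      have := Finset.centerMass_mem_convexHull Finset.univ
        (fun t _ => hw0 t) (by rw [hwsum]; norm_num) hz
      rwa [Finset.centerMass_eq_of_sum_1 _ _ hwsum, hrepr] at this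
    · -- hull ⊆ nakP
      apply convexHull_min
      · rintro y ⟨t, rfl⟩
        apply (char d (by omega) le_rfl _).2
        refine ⟨hvc0 t, fun j hj => coordN_ge _ hj, ?_⟩
        intro j hj1 hj2
        rw [hvco t j hj1 hj2]
        constructor
        · split <;> [exact hk0.le; exact le_rfl]
        · by_cases hj1' : j = 1
          · rw [if_pos hj1']
            split <;> [exact le_rfl; exact hk0.le]
          · rw [if_neg hj1', hvco t (j-1) (by omega) (by omega)]
            by_cases hle : j ≤ (t:ℕ)
            · rw [if_pos hle, if_pos (by omega)]
            · rw [if_neg hle]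
              split <;> [exact hk0.le; exact le_rfl]
      · -- convexity
        intro x hx y hy a b ha hb hab
        obtain ⟨hx1, hx0, hxb⟩ := (char d (by omega) le_rfl x).1 hx
        obtain ⟨hy1, hy0, hyb⟩ := (char d (by omega) le_rfl y).1 hy
        apply (char d (by omega) le_rfl _).2
        refine ⟨?_, fun j hj => coordN_ge _ hj, ?_⟩
        · rw [coordN_combo, hx1, hy1]; linarith
        · intro j hj1 hj2
          obtain ⟨hxp, hxu⟩ := hxb j hj1 hj2
          obtain ⟨hyp, hyu⟩ := hyb j hj1 hj2
          rw [coordN_combo]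
          constructor
          · exact add_nonneg (mul_nonneg ha hxp) (mul_nonneg hb hyp)
          · by_cases hj1' : j = 1
            · rw [if_pos hj1']
              rw [if_pos hj1'] at hxu hyu
              have h1 : a * coordN x j ≤ a * k := mul_le_mul_of_nonneg_left hxu ha
              have h2 : b * coordN y j ≤ b * k := mul_le_mul_of_nonneg_left hyu hb
              have h3 : a * (k:ℝ) + b * k = k := by rw [← add_mul, hab, one_mul]
              linarith
            · rw [if_neg hj1', coordN_combo]
              rw [if_neg hj1'] at hxu hyu
              exact add_le_add (mul_le_mul_of_nonneg_left hxu ha)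
                (mul_le_mul_of_nonneg_left hyu hb)
end
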